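/- Proposition 1 (validity of the LBBD cut in the uncongested, no-ramping setting): suppose 0 ≤ Pmin_g ≤ Pmax_g and 0 ≤ c_g ≤ C for all g ∈ G, and ∑_{g∈G} Pmin_g < d_t(ω) for every t ∈ T and ω ∈ Ω. Then for every commitment y : G × T → {0,1}, the worst-case consumer exposure satisfies the LBBD cut V̂(y) ≥ ∑_{t∈T} V̂*_t · (1 − ∑_{g∈I_{0t}} y_{gt}); moreover, at y = y* the right-hand side equals the exact worst-case exposure V̂(y*). -/

import Mathlib

open Finset

/-- Indicator of a boolean commitment value as a real number. -/
def ind (b : Bool) : ℝ := if b then 1 else 0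

/-- Available supply of the committed set `S` at price `p`:
generators with marginal cost `≤ p` produce at their maximum,
all others at their minimum. -/
noncomputable def supply {G : Type*} (c Pmin Pmax : G → ℝ) (S : Finset G) (p : ℝ) : ℝ :=
  (∑ g ∈ S.filter (fun g => c g ≤ p), Pmax g) +
  (∑ g ∈ S.filter (fun g => ¬ c g ≤ p), Pmin g)

/-- Uncongested market-clearing price for the committed set `S` and demand `D`,
with price cap (value of lost load) `C`. -/
noncomputable def clearingPrice {G : Type*} (c Pmin Pmax : G → ℝ) (C : ℝ)
    (S : Finset G) (D : ℝ) : ℝ :=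
  if D ≤ ∑ g ∈ S, Pmax g then sInf {p : ℝ | D ≤ supply c Pmin Pmax S p} else C

/-- The set of generators committed at hour `t` under commitment `y`. -/
def committedSet {G T : Type*} [Fintype G] (y : G → T → Bool) (t : T) : Finset G :=
  univ.filter (fun g => y g t = true)

/-- Total real-time consumer exposure under commitment `y` in scenario `ω`. -/
noncomputable def exposure {G T Ω : Type*} [Fintype G] [Fintype T]
    (c Pmin Pmax : G → ℝ) (C : ℝ) (Dbar : T → ℝ) (d : T → Ω → ℝ)
    (y : G → T → Bool) (ω : Ω) : ℝ :=
  ∑ t : T, clearingPrice c Pmin Pmax C (committedSet y t) (d t ω) * max (d t ω - Dbar t) 0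

/-- Worst-case total real-time consumer exposure under commitment `y`. -/
noncomputable def worstExposure {G T Ω : Type*} [Fintype G] [Fintype T] [Fintype Ω] [Nonempty Ω]
    (c Pmin Pmax : G → ℝ) (C : ℝ) (Dbar : T → ℝ) (d : T → Ω → ℝ)
    (y : G → T → Bool) : ℝ :=
  univ.sup' univ_nonempty (exposure c Pmin Pmax C Dbar d y)


-- set is in [0,∞)
lemma mem_nonneg {G : Type*} [Fintype G] {c Pmin Pmax : G → ℝ}
    (hPmin : ∀ g, 0 ≤ Pmin g) (hc0 : ∀ g, 0 ≤ c g)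
    {S : Finset G} {D : ℝ} (hD : ∑ g : G, Pmin g < D)
    {p : ℝ} (hp : D ≤ supply c Pmin Pmax S p) : 0 ≤ p := by
  by_contra h
  push_neg at h
  have h1 : S.filter (fun g => c g ≤ p) = ∅ := by
    apply Finset.filter_false_of_mem
    intro g _
    exact not_le.mpr (lt_of_lt_of_le h (hc0 g))
  have h2 : S.filter (fun g => ¬ c g ≤ p) = S := by
    apply Finset.filter_true_of_mem
    intro g _
    exact not_le.mpr (lt_of_lt_of_le h (hc0 g))
  have : supply c Pmin Pmax S p = ∑ g ∈ S, Pmin g := by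
    unfold supply; rw [h1, h2]; simp
  rw [this] at hp
  have : ∑ g ∈ S, Pmin g ≤ ∑ g : G, Pmin g :=
    Finset.sum_le_sum_of_subset_of_nonneg (Finset.subset_univ S) (fun g _ _ => hPmin g)
  linarith

lemma supply_at_C {G : Type*} [Fintype G] {c Pmin Pmax : G → ℝ} {C : ℝ}
    (hcC : ∀ g, c g ≤ C) (S : Finset G) :
    supply c Pmin Pmax S C = ∑ g ∈ S, Pmax g := by
  unfold supply
  rw [Finset.filter_true_of_mem (fun g _ => hcC g),
      Finset.filter_false_of_mem (fun g _ h => h (hcC g))]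
  simp

lemma clearing_nonneg {G : Type*} [Fintype G] (c Pmin Pmax : G → ℝ) (C : ℝ) (hC : 0 < C)
    (hPmin : ∀ g, 0 ≤ Pmin g) (hc0 : ∀ g, 0 ≤ c g)
    (S : Finset G) (D : ℝ) (hD : ∑ g : G, Pmin g < D) :
    0 ≤ clearingPrice c Pmin Pmax C S D := by
  unfold clearingPrice
  split
  · exact Real.sInf_nonneg (fun p hp => mem_nonneg hPmin hc0 hD hp)
  · exact hC.le

lemma clearing_le_C {G : Type*} [Fintype G] (c Pmin Pmax : G → ℝ) (C : ℝ)
    (hPmin : ∀ g, 0 ≤ Pmin g) (hc0 : ∀ g, 0 ≤ c g) (hcC : ∀ g, c g ≤ C)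
    (S : Finset G) (D : ℝ) (hD : ∑ g : G, Pmin g < D) :
    clearingPrice c Pmin Pmax C S D ≤ C := by
  unfold clearingPrice
  split
  · apply csInf_le ⟨0, fun p hp => mem_nonneg hPmin hc0 hD hp⟩
    show D ≤ supply c Pmin Pmax S C
    rw [supply_at_C hcC]
    assumption
  · exact le_refl C

lemma supply_mono {G : Type*} {c Pmin Pmax : G → ℝ}
    (hPmin : ∀ g, 0 ≤ Pmin g) (hPminmax : ∀ g, Pmin g ≤ Pmax g)
    {S S' : Finset G} (hSS : S ⊆ S') (p : ℝ) :
    supply c Pmin Pmax S p ≤ supply c Pmin Pmax S' p := by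
  unfold supply
  apply add_le_add
  · exact Finset.sum_le_sum_of_subset_of_nonneg (Finset.filter_subset_filter _ hSS)
      (fun g _ _ => (hPmin g).trans (hPminmax g))
  · exact Finset.sum_le_sum_of_subset_of_nonneg (Finset.filter_subset_filter _ hSS)
      (fun g _ _ => hPmin g)

lemma clearing_antitone {G : Type*} [Fintype G] (c Pmin Pmax : G → ℝ) (C : ℝ)
    (hPmin : ∀ g, 0 ≤ Pmin g) (hPminmax : ∀ g, Pmin g ≤ Pmax g)
    (hc0 : ∀ g, 0 ≤ c g) (hcC : ∀ g, c g ≤ C)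
    {S S' : Finset G} (hSS : S ⊆ S') (D : ℝ) (hD : ∑ g : G, Pmin g < D) :
    clearingPrice c Pmin Pmax C S' D ≤ clearingPrice c Pmin Pmax C S D := by
  unfold clearingPrice
  have hPmax : ∀ g, 0 ≤ Pmax g := fun g => (hPmin g).trans (hPminmax g)
  by_cases h1 : D ≤ ∑ g ∈ S, Pmax g
  · have h2 : D ≤ ∑ g ∈ S', Pmax g :=
      h1.trans (Finset.sum_le_sum_of_subset_of_nonneg hSS (fun g _ _ => hPmax g))
    rw [if_pos h1, if_pos h2]
    apply csInf_le_csInf ⟨0, fun p hp => mem_nonneg hPmin hc0 hD hp⟩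
    · exact ⟨C, by simp only [Set.mem_setOf_eq]; rw [supply_at_C hcC]; exact h1⟩
    · intro p hp
      exact hp.trans (supply_mono hPmin hPminmax hSS p)
  · rw [if_neg h1]
    split
    · apply csInf_le ⟨0, fun p hp => mem_nonneg hPmin hc0 hD hp⟩
      show D ≤ supply c Pmin Pmax S' C
      rw [supply_at_C hcC]; assumption
    · exact le_refl C

/-- Proposition 1 (validity of the LBBD cut in the uncongested, no-ramping setting):
for every commitment `y`, `V̂(y) ≥ ∑_t V̂*_t · (1 − ∑_{g∈I₀ₜ} y_{gt})`, where
`V̂*_t = λ_C(S_t(y*), d_t(ω*)) · (d_t(ω*) − D̄_t)⁺` and `ω*` is a worst-case scenario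
for `y*`; moreover at `y = y*` the right-hand side equals the exact worst-case
exposure `V̂(y*)`. -/
theorem lbbd_cut_valid {G T Ω : Type*} [Fintype G] [Fintype T] [Fintype Ω] [Nonempty Ω]
    (c Pmin Pmax : G → ℝ) (C : ℝ) (hC : 0 < C)
    (hPmin : ∀ g, 0 ≤ Pmin g) (hPminmax : ∀ g, Pmin g ≤ Pmax g)
    (hc0 : ∀ g, 0 ≤ c g) (hcC : ∀ g, c g ≤ C)
    (Dbar : T → ℝ) (d : T → Ω → ℝ) (hd : ∀ t ω, 0 < d t ω)
    (hmin : ∀ t ω, ∑ g : G, Pmin g < d t ω)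
    (ystar : G → T → Bool) (ωstar : Ω)
    (hωstar : ∀ ω : Ω,
      exposure c Pmin Pmax C Dbar d ystar ω ≤ exposure c Pmin Pmax C Dbar d ystar ωstar) :
    (∀ y : G → T → Bool,
      worstExposure c Pmin Pmax C Dbar d y ≥
        ∑ t : T,
          (clearingPrice c Pmin Pmax C (committedSet ystar t) (d t ωstar) *
              max (d t ωstar - Dbar t) 0) *
            (1 - ∑ g ∈ univ.filter (fun g => ystar g t = false), ind (y g t))) ∧
    (∑ t : T,
        (clearingPrice c Pmin Pmax C (committedSet ystar t) (d t ωstar) *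
            max (d t ωstar - Dbar t) 0) *
          (1 - ∑ g ∈ univ.filter (fun g => ystar g t = false), ind (ystar g t))) =
      worstExposure c Pmin Pmax C Dbar d ystar := by
  have hind_nonneg : ∀ b : Bool, 0 ≤ ind b := by
    intro b; unfold ind; split <;> norm_num
  have hworst_eq : worstExposure c Pmin Pmax C Dbar d ystar =
      exposure c Pmin Pmax C Dbar d ystar ωstar := by
    apply le_antisymm
    · exact Finset.sup'_le _ _ (fun ω _ => hωstar ω)
    · exact Finset.le_sup' _ (Finset.mem_univ ωstar)
  constructor
  · intro y
    have key : ∑ t : T,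
          (clearingPrice c Pmin Pmax C (committedSet ystar t) (d t ωstar) *
              max (d t ωstar - Dbar t) 0) *
            (1 - ∑ g ∈ univ.filter (fun g => ystar g t = false), ind (y g t)) ≤
        exposure c Pmin Pmax C Dbar d y ωstar := by
      unfold exposure
      apply Finset.sum_le_sum
      intro t _
      set s := ∑ g ∈ univ.filter (fun g => ystar g t = false), ind (y g t) with hs_def
      have hs_nonneg : 0 ≤ s :=
        Finset.sum_nonneg (fun g _ => hind_nonneg (y g t))
      have hLstar : 0 ≤ clearingPrice c Pmin Pmax C (committedSet ystar t) (d t ωstar) :=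
        clearing_nonneg c Pmin Pmax C hC hPmin hc0 _ _ (hmin t ωstar)
      have hLy : 0 ≤ clearingPrice c Pmin Pmax C (committedSet y t) (d t ωstar) :=
        clearing_nonneg c Pmin Pmax C hC hPmin hc0 _ _ (hmin t ωstar)
      have hmax_nonneg : (0:ℝ) ≤ max (d t ωstar - Dbar t) 0 := le_max_right _ _
      by_cases hs : s = 0
      · have hall : ∀ g ∈ univ.filter (fun g => ystar g t = false), ind (y g t) = 0 :=
          (Finset.sum_eq_zero_iff_of_nonneg (fun g _ => hind_nonneg (y g t))).mp hs
        have hsub : committedSet y t ⊆ committedSet ystar t := by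
          intro g hg
          simp only [committedSet, Finset.mem_filter, Finset.mem_univ, true_and] at hg ⊢
          by_contra h
          have hg' : ystar g t = false := by cases hb : ystar g t <;> simp_all
          have := hall g (by simp [hg'])
          rw [hg] at this
          simp [ind] at this
        have hmono := clearing_antitone c Pmin Pmax C hPmin hPminmax hc0 hcC hsub
          (d t ωstar) (hmin t ωstar)
        rw [hs]
        have : clearingPrice c Pmin Pmax C (committedSet ystar t) (d t ωstar) *
            max (d t ωstar - Dbar t) 0 ≤
            clearingPrice c Pmin Pmax C (committedSet y t) (d t ωstar) *
            max (d t ωstar - Dbar t) 0 :=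
          mul_le_mul_of_nonneg_right hmono hmax_nonneg
        linarith
      · have h1 : 1 - s ≤ 0 := by
          obtain ⟨g, hg, hgne⟩ := Finset.exists_ne_zero_of_sum_ne_zero hs
          have : ind (y g t) = 1 := by
            unfold ind at hgne ⊢; split at hgne <;> simp_all
          have hle : ind (y g t) ≤ s := Finset.single_le_sum
            (f := fun g => ind (y g t)) (fun g _ => hind_nonneg (y g t)) hg
          rw [this] at hle
          linarith
        have : (clearingPrice c Pmin Pmax C (committedSet ystar t) (d t ωstar) *
            max (d t ωstar - Dbar t) 0) * (1 - s) ≤ 0 :=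
          mul_nonpos_of_nonneg_of_nonpos (mul_nonneg hLstar hmax_nonneg) h1
        have h2 : 0 ≤ clearingPrice c Pmin Pmax C (committedSet y t) (d t ωstar) *
            max (d t ωstar - Dbar t) 0 := mul_nonneg hLy hmax_nonneg
        linarith
    exact le_trans key (Finset.le_sup' _ (Finset.mem_univ ωstar))
  · rw [hworst_eq]
    unfold exposure
    apply Finset.sum_congr rfl
    intro t _
    have hz : ∑ g ∈ univ.filter (fun g => ystar g t = false), ind (ystar g t) = 0 := by
      apply Finset.sum_eq_zero
      intro g hg
      simp only [Finset.mem_filter] at hg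
      simp [ind, hg.2]
    rw [hz]
    ring
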